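/- arXiv:2311.00352 — 3 statements merged into one kernel-verified Lean document; each statement's English description precedes it below -/
import Mathlib

section
/- Every finite meta-Nil-Hamiltonian group is soluble. -/
/-- A group is *minimal non-nilpotent* if it is not nilpotent but every proper
subgroup of it is nilpotent. -/
def MinimalNonNilpotent (G : Type*) [Group G] : Prop :=
  ¬ Group.IsNilpotent G ∧ ∀ H : Subgroup G, H ≠ ⊤ → Group.IsNilpotent H

/-- A group is *biminimal non-nilpotent* if it is neither nilpotent nor minimal
non-nilpotent, but every proper subgroup of it is nilpotent or minimal non-nilpotent. -/
def BiminimalNonNilpotent (G : Type*) [Group G] : Prop :=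
  ¬ Group.IsNilpotent G ∧ ¬ MinimalNonNilpotent G ∧
    ∀ H : Subgroup G, H ≠ ⊤ → (Group.IsNilpotent H ∨ MinimalNonNilpotent H)

/-- A group is *para-Nil-Hamiltonian* if it is not nilpotent and every non-normal
subgroup of it is either nilpotent or minimal non-nilpotent. -/
def ParaNilHamiltonian (G : Type*) [Group G] : Prop :=
  ¬ Group.IsNilpotent G ∧
    ∀ H : Subgroup G, ¬ H.Normal → (Group.IsNilpotent H ∨ MinimalNonNilpotent H)

/-- A group is *meta-Nil-Hamiltonian* if every non-nilpotent subgroup of it is normal. -/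
def MetaNilHamiltonian (G : Type*) [Group G] : Prop :=
  ∀ H : Subgroup G, ¬ Group.IsNilpotent H → H.Normal

/-- A group is *locally graded* if every non-trivial finitely generated subgroup of it
contains a proper subgroup of finite index. -/
def LocallyGraded (G : Type*) [Group G] : Prop :=
  ∀ H : Subgroup G, H ≠ ⊥ → Group.FG H → ∃ K : Subgroup H, K ≠ ⊤ ∧ K.FiniteIndex

/-- A group is abelian if its multiplication commutes. -/
def Abelian (G : Type*) [Group G] : Prop := ∀ a b : G, a * b = b * a

/-- A group is *minimal non-abelian* if it is not abelian but every proper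
subgroup of it is abelian. -/
def MinimalNonAbelian (G : Type*) [Group G] : Prop :=
  ¬ Abelian G ∧ ∀ H : Subgroup G, H ≠ ⊤ → Abelian H

/-- A group is *biminimal non-abelian* if it is neither abelian nor minimal non-abelian,
but every proper subgroup of it is abelian or minimal non-abelian. -/
def BiminimalNonAbelian (G : Type*) [Group G] : Prop :=
  ¬ Abelian G ∧ ¬ MinimalNonAbelian G ∧
    ∀ H : Subgroup G, H ≠ ⊤ → (Abelian H ∨ MinimalNonAbelian H)

/-- A group is *parahamiltonian* if it is not abelian and every non-normal subgroup
of it is either abelian or minimal non-abelian. -/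
def Parahamiltonian (G : Type*) [Group G] : Prop :=
  ¬ Abelian G ∧ ∀ H : Subgroup G, ¬ H.Normal → (Abelian H ∨ MinimalNonAbelian H)

/-- A group is *locally nilpotent* if every finitely generated subgroup of it is nilpotent. -/
def LocallyNilpotent (G : Type*) [Group G] : Prop :=
  ∀ H : Subgroup G, Group.FG H → Group.IsNilpotent H


section MetaNilSolvable

open Subgroup MulAction Pointwise


section Helpers

variable {G : Type*} [Group G]

private theorem myCardLt [Finite G] {H K : Subgroup G} (h : H < K) :
    Nat.card H < Nat.card K := by
  have h1 : (H : Set G) ⊂ (K : Set G) := SetLike.coe_ssubset_coe.mpr h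
  simpa [Nat.card_coe_set_eq] using Set.Finite.card_lt_card (Set.toFinite _) h1

private theorem smulEqIffNorm (M : Subgroup G) (g : ConjAct G) :
    g • M = M ↔ ConjAct.ofConjAct g ∈ (Subgroup.normalizer (M : Set G)) := by
  rw [Subgroup.mem_normalizer_iff]
  constructor
  · intro h x
    constructor
    · intro hx
      have := Subgroup.smul_mem_pointwise_smul x g M hx
      rw [h] at this
      simpa [ConjAct.smul_def] using this
    · intro hx
      have : ConjAct.ofConjAct g * x * (ConjAct.ofConjAct g)⁻¹ ∈ g • M := by
        rw [h]; exact hx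
      rw [Subgroup.mem_pointwise_smul_iff_inv_smul_mem] at this
      simpa [ConjAct.smul_def, mul_assoc] using this
  · intro h
    ext x
    rw [Subgroup.mem_pointwise_smul_iff_inv_smul_mem, ConjAct.smul_def]
    simp only [map_inv, inv_inv]
    rw [h ((ConjAct.ofConjAct g)⁻¹ * x * ConjAct.ofConjAct g)]
    constructor
    · intro hx; convert hx using 2; group
    · intro hx; convert hx using 2; group

private theorem cardOrbitEq [Finite G] (M : Subgroup G) :
    Nat.card (orbit (ConjAct G) M) = (Subgroup.normalizer (M : Set G)).index := by
  have h1 : Nat.card (orbit (ConjAct G) M) = (stabilizer (ConjAct G) M).index := by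
    rw [Subgroup.index, Nat.card_congr (orbitEquivQuotientStabilizer (ConjAct G) M)]
  rw [h1]
  have h2 : stabilizer (ConjAct G) M
      = (Subgroup.normalizer (M : Set G)).comap (ConjAct.ofConjAct : ConjAct G ≃* G).toMonoidHom := by
    ext g
    rw [mem_stabilizer_iff, Subgroup.mem_comap]
    exact smulEqIffNorm M g
  rw [h2, Subgroup.index_comap_of_surjective _ (MulEquiv.surjective _)]

private theorem cardSmul (g : ConjAct G) (M : Subgroup G) :
    Nat.card (g • M : Subgroup G) = Nat.card M := by
  have h1 : ((g • M : Subgroup G) : Set G) = (g • ·) '' (M : Set G) := by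
    rw [Subgroup.coe_pointwise_smul, ← Set.image_smul]
  rw [show Nat.card (g • M : Subgroup G) = ((g • M : Subgroup G) : Set G).ncard from
      (Nat.card_coe_set_eq _).symm,
    show Nat.card M = (M : Set G).ncard from (Nat.card_coe_set_eq _).symm, h1,
    Set.ncard_image_of_injective _ (MulAction.injective g)]

private theorem smulTop (g : ConjAct G) : g • (⊤ : Subgroup G) = ⊤ := by
  ext x
  simp [Subgroup.mem_pointwise_smul_iff_inv_smul_mem]

private theorem coatomSmul (g : ConjAct G) {M : Subgroup G} (h : IsCoatom M) :
    IsCoatom (g • M) := by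
  constructor
  · intro htop
    apply h.1
    have := congrArg (fun K => g⁻¹ • K) htop
    simpa [smulTop] using this
  · intro K hK
    have h2 : M < g⁻¹ • K := by
      rw [lt_iff_le_and_ne] at hK ⊢
      constructor
      · rw [← Subgroup.pointwise_smul_le_pointwise_smul_iff (a := g), smul_inv_smul]
        exact hK.1
      · intro heq
        apply hK.2
        have := congrArg (fun K => g • K) heq
        simpa [smul_inv_smul] using this
    have h3 := h.2 _ h2
    have := congrArg (fun K => g • K) h3
    simpa [smul_inv_smul, smulTop] using this

private theorem mapSubtypeLt {H : Subgroup G} {A B : Subgroup H} (h : A < B) :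
    A.map H.subtype < B.map H.subtype :=
  lt_of_le_of_ne (Subgroup.map_mono h.le)
    (fun e => h.ne (Subgroup.map_injective H.subtype_injective e))

end Helpers

section Schmidt

variable {G : Type*} [Group G] [Finite G]

private theorem schmidt_contra (hnn : ¬ Group.IsNilpotent G)
    (hprop : ∀ H : Subgroup G, H ≠ ⊤ → Group.IsNilpotent H)
    (hsimp : ∀ N : Subgroup G, N.Normal → N = ⊥ ∨ N = ⊤) : False := by
  classical
  have hnontriv : Nontrivial G := by
    by_contra h
    rw [not_nontrivial_iff_subsingleton] at h
    exact hnn Group.isNilpotent_of_subsingleton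
  -- no element generates G
  have hcyc : ∀ g : G, Subgroup.zpowers g ≠ ⊤ := by
    intro g hg
    have : IsCyclic G := ⟨g, fun x => by
      have : x ∈ Subgroup.zpowers g := hg ▸ Subgroup.mem_top x
      exact this⟩
    letI := IsCyclic.commGroup (α := G)
    exact hnn CommGroup.isNilpotent
  -- every proper subgroup lies in a coatom
  have hcoat : ∀ H : Subgroup G, H ≠ ⊤ → ∃ M : Subgroup G, IsCoatom M ∧ H ≤ M := by
    intro H hH
    exact (eq_top_or_exists_le_coatom H).resolve_left hH
  -- every element lies in a coatom
  have hmemcoat : ∀ g : G, ∃ M : Subgroup G, IsCoatom M ∧ g ∈ M := by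
    intro g
    obtain ⟨M, hM, hle⟩ := hcoat (Subgroup.zpowers g) (hcyc g)
    exact ⟨M, hM, hle (Subgroup.mem_zpowers g)⟩
  -- coatoms are nontrivial
  have hcoatbot : ∀ M : Subgroup G, IsCoatom M → M ≠ ⊥ := by
    rintro M hM rfl
    obtain ⟨g, hg⟩ := exists_ne (1 : G)
    have h1 : (⊥ : Subgroup G) < Subgroup.zpowers g := by
      rw [bot_lt_iff_ne_bot]
      intro h
      exact hg (by simpa [h] using Subgroup.mem_zpowers g)
    exact hcyc g (hM.2 _ h1)
  -- coatoms are self-normalizing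
  have hselfnorm : ∀ M : Subgroup G, IsCoatom M → (Subgroup.normalizer (M : Set G)) = M := by
    intro M hM
    rcases eq_or_lt_of_le (Subgroup.le_normalizer (H := M)) with h | h
    · exact h.symm
    · exfalso
      have htop := hM.2 _ h
      have hnormal : M.Normal := Subgroup.normalizer_eq_top_iff.mp htop
      rcases hsimp M hnormal with h1 | h1
      · exact hcoatbot M hM h1
      · exact hM.1 h1
  -- Step A: distinct coatoms intersect trivially
  have stepA : ∀ M₁ M₂ : Subgroup G, IsCoatom M₁ → IsCoatom M₂ → M₁ ≠ M₂ → M₁ ⊓ M₂ = ⊥ := by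
    by_contra hA
    push_neg at hA
    set P : Set (Subgroup G) :=
      {D | ∃ M₁ M₂ : Subgroup G, IsCoatom M₁ ∧ IsCoatom M₂ ∧ M₁ ≠ M₂ ∧ D = M₁ ⊓ M₂ ∧ D ≠ ⊥}
      with hP
    have hPne : P.Nonempty := by
      obtain ⟨M₁, M₂, h1, h2, h3, h4⟩ := hA
      exact ⟨M₁ ⊓ M₂, M₁, M₂, h1, h2, h3, rfl, h4⟩
    obtain ⟨D, hD, hmax⟩ :=
      Set.Finite.exists_maximalFor (fun D : Subgroup G => Nat.card D) P (Set.toFinite P) hPne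
    obtain ⟨M₁, M₂, hM₁, hM₂, hne, rfl, hDbot⟩ := hD
    set D := M₁ ⊓ M₂ with hDdef
    -- D < M₁
    have hDM₁ : D < M₁ := by
      rcases lt_or_eq_of_le (inf_le_left : D ≤ M₁) with h | h
      · exact h
      · exfalso
        have h12 : M₁ ≤ M₂ := by rw [← h]; exact inf_le_right
        exact hM₂.1 (hM₁.2 _ (lt_of_le_of_ne h12 hne))
    -- M₁ is nilpotent, use the normalizer condition
    haveI hnilM₁ : Group.IsNilpotent M₁ := hprop M₁ hM₁.1
    have hnc : NormalizerCondition M₁ := normalizerCondition_of_isNilpotent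
    have hD'top : D.subgroupOf M₁ < ⊤ := by
      rw [lt_top_iff_ne_top]
      intro h
      rw [Subgroup.subgroupOf_eq_top] at h
      exact hDM₁.ne (le_antisymm hDM₁.le h)
    have hlt := hnc _ hD'top
    -- E is the normalizer of D inside M₁, pushed to G
    set E : Subgroup G := ((Subgroup.normalizer ((D.subgroupOf M₁ : Subgroup M₁) : Set M₁))).map M₁.subtype with hE
    have hDmap : (D.subgroupOf M₁).map M₁.subtype = D := by
      rw [Subgroup.subgroupOf_map_subtype, inf_eq_left]
      exact hDM₁.le
    have hDE : D < E := by
      rw [← hDmap]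
      exact mapSubtypeLt hlt
    have hEM₁ : E ≤ M₁ := Subgroup.map_subtype_le _
    have hEnorm : E ≤ (Subgroup.normalizer (D : Set G)) := by
      rintro x ⟨y, hy, rfl⟩
      rw [Subgroup.mem_normalizer_iff]
      intro h
      constructor
      · intro hh
        have hhM₁ : h ∈ M₁ := hDM₁.le hh
        have h1 : (⟨h, hhM₁⟩ : M₁) ∈ D.subgroupOf M₁ := hh
        have h2 := (Subgroup.mem_normalizer_iff.mp hy ⟨h, hhM₁⟩).mp h1
        exact h2
      · intro hh
        have hxM₁ : (y : G) ∈ M₁ := y.2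
        have hhM₁ : (y : G) * h * (y : G)⁻¹ ∈ M₁ := hDM₁.le hh
        have hhin : h ∈ M₁ := by
          have := M₁.mul_mem (M₁.mul_mem (M₁.inv_mem hxM₁) hhM₁) hxM₁
          convert this using 1
          group
        have h1 : (y * ⟨h, hhin⟩ * y⁻¹ : M₁) ∈ D.subgroupOf M₁ := by
          show ((y * ⟨h, hhin⟩ * y⁻¹ : M₁) : G) ∈ D
          convert hh using 1
          simp
        have h2 := (Subgroup.mem_normalizer_iff.mp hy ⟨h, hhin⟩).mpr h1
        exact h2
    have hNtop : (Subgroup.normalizer (D : Set G)) ≠ ⊤ := by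
      intro h
      rcases hsimp D (Subgroup.normalizer_eq_top_iff.mp h) with h1 | h1
      · exact hDbot h1
      · exact hM₁.1 (top_le_iff.mp (h1 ▸ hDM₁.le : (⊤ : Subgroup G) ≤ M₁))
    obtain ⟨M₃, hM₃, hNM₃⟩ := hcoat _ hNtop
    have key : ∀ M : Subgroup G, IsCoatom M → E ≤ M → M₁ ⊓ M ≠ ⊥ → M = M₁ := by
      intro M hM hEM hbot
      by_contra hMne
      have hDlt : D < M₁ ⊓ M := lt_of_lt_of_le hDE (le_inf hEM₁ hEM)
      have hmem : M₁ ⊓ M ∈ P := ⟨M₁, M, hM₁, hM, fun h => hMne h.symm, rfl, hbot⟩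
      have := hmax hmem (le_of_lt (myCardLt hDlt))
      exact (myCardLt hDlt).not_ge this
    have hEM₃ : E ≤ M₃ := le_trans hEnorm hNM₃
    have h31 : M₃ = M₁ := by
      apply key M₃ hM₃ hEM₃
      intro h
      apply hDbot
      rw [← le_bot_iff, ← h]
      exact le_inf hDM₁.le (le_trans hDE.le hEM₃)
    -- symmetric argument for M₂ : need D < M₂ as well
    have hDM₂ : D < M₂ := by
      rcases lt_or_eq_of_le (inf_le_right : D ≤ M₂) with h | h
      · exact h
      · exfalso
        have h21 : M₂ ≤ M₁ := by rw [← h]; exact inf_le_left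
        exact hM₁.1 (hM₂.2 _ (lt_of_le_of_ne h21 (Ne.symm hne)))
    -- redo with M₂
    haveI hnilM₂ : Group.IsNilpotent M₂ := hprop M₂ hM₂.1
    have hnc₂ : NormalizerCondition M₂ := normalizerCondition_of_isNilpotent
    have hD'top₂ : D.subgroupOf M₂ < ⊤ := by
      rw [lt_top_iff_ne_top]
      intro h
      rw [Subgroup.subgroupOf_eq_top] at h
      exact hDM₂.ne (le_antisymm hDM₂.le h)
    have hlt₂ := hnc₂ _ hD'top₂
    set E₂ : Subgroup G := ((Subgroup.normalizer ((D.subgroupOf M₂ : Subgroup M₂) : Set M₂))).map M₂.subtype with hE₂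
    have hDmap₂ : (D.subgroupOf M₂).map M₂.subtype = D := by
      rw [Subgroup.subgroupOf_map_subtype, inf_eq_left]
      exact hDM₂.le
    have hDE₂ : D < E₂ := by
      rw [← hDmap₂]
      exact mapSubtypeLt hlt₂
    have hEM₂' : E₂ ≤ M₂ := Subgroup.map_subtype_le _
    have hEnorm₂ : E₂ ≤ (Subgroup.normalizer (D : Set G)) := by
      rintro x ⟨y, hy, rfl⟩
      rw [Subgroup.mem_normalizer_iff]
      intro h
      constructor
      · intro hh
        have hhM : h ∈ M₂ := hDM₂.le hh
        exact (Subgroup.mem_normalizer_iff.mp hy ⟨h, hhM⟩).mp hh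
      · intro hh
        have hxM : (y : G) ∈ M₂ := y.2
        have hhM : (y : G) * h * (y : G)⁻¹ ∈ M₂ := hDM₂.le hh
        have hhin : h ∈ M₂ := by
          have := M₂.mul_mem (M₂.mul_mem (M₂.inv_mem hxM) hhM) hxM
          convert this using 1
          group
        have h1 : (y * ⟨h, hhin⟩ * y⁻¹ : M₂) ∈ D.subgroupOf M₂ := by
          show ((y * ⟨h, hhin⟩ * y⁻¹ : M₂) : G) ∈ D
          convert hh using 1
          simp
        exact (Subgroup.mem_normalizer_iff.mp hy ⟨h, hhin⟩).mpr h1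
    have hE₂M₃ : E₂ ≤ M₃ := le_trans hEnorm₂ hNM₃
    have key₂ : ∀ M : Subgroup G, IsCoatom M → E₂ ≤ M → M₂ ⊓ M ≠ ⊥ → M = M₂ := by
      intro M hM hEM hbot
      by_contra hMne
      have hDlt : D < M₂ ⊓ M := lt_of_lt_of_le hDE₂ (le_inf hEM₂' hEM)
      have hmem : M₂ ⊓ M ∈ P := ⟨M₂, M, hM₂, hM, fun h => hMne h.symm, rfl, hbot⟩
      have hc := myCardLt hDlt
      exact hc.not_ge (hmax hmem hc.le)
    have h32 : M₃ = M₂ := by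
      apply key₂ M₃ hM₃ hE₂M₃
      intro h
      apply hDbot
      rw [← le_bot_iff, ← h]
      exact le_inf hDM₂.le (le_trans hDE₂.le hE₂M₃)
    exact hne (h31.symm.trans h32)
  -- Counting argument
  haveI : Fintype G := Fintype.ofFinite G
  set N := Nat.card G with hN
  let A : Subgroup G → Finset G := fun M => (Set.toFinset (M : Set G)).erase 1
  have hAcard : ∀ M : Subgroup G, (A M).card = Nat.card M - 1 := by
    intro M
    have h1 : (1 : G) ∈ Set.toFinset (M : Set G) := Set.mem_toFinset.mpr M.one_mem
    rw [Finset.card_erase_of_mem h1, Set.toFinset_card, ← Nat.card_eq_fintype_card]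
    rfl
  have hAmem : ∀ (M : Subgroup G) (x : G), x ∈ M → x ≠ 1 → x ∈ A M := by
    intro M x hx hx1
    exact Finset.mem_erase.mpr ⟨hx1, Set.mem_toFinset.mpr hx⟩
  have hdisj : ∀ M M' : Subgroup G, IsCoatom M → IsCoatom M' → M ≠ M' →
      Disjoint (A M) (A M') := by
    intro M M' hM hM' hne
    rw [Finset.disjoint_left]
    intro x hx hx'
    have h1 : x ∈ M ⊓ M' := ⟨Set.mem_toFinset.mp (Finset.mem_erase.mp hx).2,
      Set.mem_toFinset.mp (Finset.mem_erase.mp hx').2⟩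
    rw [stepA M M' hM hM' hne] at h1
    exact (Finset.mem_erase.mp hx).1 h1
  have hsum : ∀ T : Finset (Subgroup G), (∀ M ∈ T, IsCoatom M) →
      (∑ M ∈ T, (A M).card) ≤ N - 1 := by
    intro T hT
    rw [← Finset.card_biUnion (fun M hM M' hM' hne => hdisj _ _ (hT _ hM) (hT _ hM') hne)]
    have hsub : T.biUnion A ⊆ Finset.univ.erase 1 := by
      intro x hx
      obtain ⟨M, _, hxM⟩ := Finset.mem_biUnion.mp hx
      exact Finset.mem_erase.mpr ⟨(Finset.mem_erase.mp hxM).1, Finset.mem_univ x⟩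
    calc (T.biUnion A).card ≤ (Finset.univ.erase 1).card := Finset.card_le_card hsub
    _ = N - 1 := by
      rw [Finset.card_erase_of_mem (Finset.mem_univ 1), hN, Nat.card_eq_fintype_card,
        Finset.card_univ]
  let O : Subgroup G → Finset (Subgroup G) := fun M => Set.toFinset (orbit (ConjAct G) M)
  have hOmem : ∀ M K : Subgroup G, K ∈ O M → ∃ g : ConjAct G, g • M = K := by
    intro M K hK
    rw [Set.mem_toFinset] at hK
    exact hK
  have hOself : ∀ M : Subgroup G, M ∈ O M := fun M =>
    Set.mem_toFinset.mpr (mem_orbit_self M)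
  have hOcard : ∀ M : Subgroup G, IsCoatom M → (O M).card = M.index := by
    intro M hM
    rw [Set.toFinset_card, ← Nat.card_eq_fintype_card, cardOrbitEq M, hselfnorm M hM]
  have hOcoatom : ∀ M K, IsCoatom M → K ∈ O M → IsCoatom K := by
    intro M K h hK
    obtain ⟨g, rfl⟩ := hOmem M K hK
    exact coatomSmul g h
  have hcoat2 : ∀ M : Subgroup G, IsCoatom M → 2 ≤ Nat.card M := by
    intro M hM
    have h1 : Nat.card M ≠ 1 := fun h => hcoatbot M hM (Subgroup.card_eq_one.mp h)
    have h2 : 0 < Nat.card M := Nat.card_pos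
    omega
  have hidx2 : ∀ M : Subgroup G, IsCoatom M → 2 ≤ M.index := by
    intro M hM
    have h1 : M.index ≠ 1 := fun h => hM.1 (Subgroup.index_eq_one.mp h)
    have h2 : M.index ≠ 0 := Subgroup.index_ne_zero_of_finite
    omega
  have hidxN : ∀ M : Subgroup G, IsCoatom M → 2 * M.index ≤ N := by
    intro M hM
    calc 2 * M.index = M.index * 2 := Nat.mul_comm _ _
    _ ≤ M.index * Nat.card M := Nat.mul_le_mul_left _ (hcoat2 M hM)
    _ = N := Subgroup.index_mul_card M
  have hOsum : ∀ M : Subgroup G, IsCoatom M → (∑ K ∈ O M, (A K).card) = N - M.index := by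
    intro M hM
    have hc : ∀ K ∈ O M, (A K).card = Nat.card M - 1 := by
      intro K hK
      obtain ⟨g, rfl⟩ := hOmem M K hK
      rw [hAcard, cardSmul]
    rw [Finset.sum_congr rfl hc, Finset.sum_const, smul_eq_mul, hOcard M hM]
    rw [Nat.mul_sub, Nat.mul_one, Subgroup.index_mul_card M]
  have hN2 : 2 ≤ N := Finite.one_lt_card
  obtain ⟨g0, hg0⟩ := exists_ne (1 : G)
  obtain ⟨M₁, hM₁, _⟩ := hmemcoat g0
  -- an element outside all conjugates of M₁
  have hcard1 : ((O M₁).biUnion A).card < (Finset.univ.erase (1 : G)).card := by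
    rw [Finset.card_biUnion (fun K hK K' hK' hne =>
      hdisj _ _ (hOcoatom M₁ K hM₁ hK) (hOcoatom M₁ K' hM₁ hK') hne),
      hOsum M₁ hM₁, Finset.card_erase_of_mem (Finset.mem_univ 1), Finset.card_univ,
      ← Nat.card_eq_fintype_card]
    have := hidx2 M₁ hM₁
    have := hidxN M₁ hM₁
    omega
  have hsub1 : (O M₁).biUnion A ⊆ Finset.univ.erase (1 : G) := by
    intro y hy
    obtain ⟨M, _, hyM⟩ := Finset.mem_biUnion.mp hy
    exact Finset.mem_erase.mpr ⟨(Finset.mem_erase.mp hyM).1, Finset.mem_univ y⟩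
  have hssne : (O M₁).biUnion A ≠ Finset.univ.erase (1 : G) := fun h => by
    rw [h] at hcard1
    exact lt_irrefl _ hcard1
  obtain ⟨x, hxt, hxn⟩ := Finset.exists_of_ssubset (ssubset_of_subset_of_ne hsub1 hssne)
  have hx1 : x ≠ 1 := (Finset.mem_erase.mp hxt).1
  obtain ⟨M₂, hM₂, hxM₂⟩ := hmemcoat x
  have hM₂O : M₂ ∉ O M₁ := fun h =>
    hxn (Finset.mem_biUnion.mpr ⟨M₂, h, hAmem M₂ x hxM₂ hx1⟩)
  have hdisjO : Disjoint (O M₁) (O M₂) := by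
    rw [Finset.disjoint_left]
    intro K hK1 hK2
    apply hM₂O
    rw [Set.mem_toFinset] at hK1 hK2
    obtain ⟨g, hg⟩ := hK2
    obtain ⟨h, hh⟩ := hK1
    simp only at hg hh
    refine Set.mem_toFinset.mpr ⟨g⁻¹ * h, ?_⟩
    show (g⁻¹ * h) • M₁ = M₂
    rw [mul_smul, hh, ← hg, inv_smul_smul]
  have hTcoat : ∀ M ∈ O M₁ ∪ O M₂, IsCoatom M := by
    intro M hM
    rcases Finset.mem_union.mp hM with h | h
    · exact hOcoatom M₁ M hM₁ h
    · exact hOcoatom M₂ M hM₂ h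
  have hfinal := hsum (O M₁ ∪ O M₂) hTcoat
  rw [Finset.sum_union hdisjO, hOsum M₁ hM₁, hOsum M₂ hM₂] at hfinal
  have h1 := hidxN M₁ hM₁
  have h2 := hidxN M₂ hM₂
  have h3 := hidx2 M₁ hM₁
  have h4 := hidx2 M₂ hM₂
  omega

end Schmidt

section Main


variable {G : Type*} [Group G]

private theorem metaSub (hm : MetaNilHamiltonian G) (N : Subgroup G) :
    MetaNilHamiltonian N := by
  intro H hH
  have hinj : Function.Injective N.subtype := N.subtype_injective
  have h1 : ¬ Group.IsNilpotent (H.map N.subtype) := by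
    intro h
    apply hH
    exact nilpotent_of_mulEquiv (Subgroup.equivMapOfInjective H N.subtype hinj).symm
  have h2 := hm _ h1
  have h3 : ((H.map N.subtype).comap N.subtype).Normal := h2.comap N.subtype
  rwa [Subgroup.comap_map_eq_self_of_injective hinj] at h3

private theorem metaQuot (hm : MetaNilHamiltonian G) (N : Subgroup G) [N.Normal] :
    MetaNilHamiltonian (G ⧸ N) := by
  intro H hH
  have hs : Function.Surjective (QuotientGroup.mk' N) := QuotientGroup.mk'_surjective N
  set K := H.comap (QuotientGroup.mk' N) with hK
  have hmap : K.map (QuotientGroup.mk' N) = H :=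
    Subgroup.map_comap_eq_self_of_surjective hs H
  have hKnn : ¬ Group.IsNilpotent K := by
    intro h
    apply hH
    have hr : ((QuotientGroup.mk' N).comp K.subtype).range = H := by
      rw [MonoidHom.range_comp, Subgroup.range_subtype, hmap]
    have h2 : Group.IsNilpotent ((QuotientGroup.mk' N).comp K.subtype).range :=
      nilpotent_of_surjective _ (MonoidHom.rangeRestrict_surjective _)
    rwa [hr] at h2
  have := (hm K hKnn).map (QuotientGroup.mk' N) hs
  rwa [hmap] at this

private theorem mainAux : ∀ (n : ℕ) {G : Type u} [Group G] [Finite G],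
    Nat.card G = n → MetaNilHamiltonian G → IsSolvable G := by
  intro n
  induction n using Nat.strong_induction_on with
  | _ n ih =>
    intro G _ _ hcard hmeta
    by_cases hnil : Group.IsNilpotent G
    · exact @IsNilpotent.to_isSolvable G _ hnil
    by_cases hex : ∃ N : Subgroup G, N.Normal ∧ N ≠ ⊥ ∧ N ≠ ⊤
    · obtain ⟨N, hNnorm, hNbot, hNtop⟩ := hex
      haveI := hNnorm
      have hcardN : Nat.card N < n := by
        rw [← hcard, ← Subgroup.card_top (G := G)]
        exact myCardLt (lt_top_iff_ne_top.mpr hNtop)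
      have hcardQ : Nat.card (G ⧸ N) < n := by
        have h1 : Nat.card (G ⧸ N) = N.index := rfl
        have h2 : N.index * Nat.card N = Nat.card G := Subgroup.index_mul_card N
        have h3 : 2 ≤ Nat.card N := by
          have : Nat.card N ≠ 1 := fun h => hNbot (Subgroup.card_eq_one.mp h)
          have : 0 < Nat.card N := Nat.card_pos
          omega
        have h4 : 0 < Nat.card G := Nat.card_pos
        rw [h1, ← hcard]
        nlinarith [h2, h3, h4]
      haveI hs1 : IsSolvable N := ih _ hcardN rfl (metaSub hmeta N)
      haveI hs2 : IsSolvable (G ⧸ N) := ih _ hcardQ rfl (metaQuot hmeta N)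
      refine solvable_of_ker_le_range N.subtype (QuotientGroup.mk' N) ?_ (hG' := hs1) (hG'' := hs2)
      rw [QuotientGroup.ker_mk', Subgroup.range_subtype]
    · push_neg at hex
      exfalso
      have hsimp : ∀ M : Subgroup G, M.Normal → M = ⊥ ∨ M = ⊤ := by
        intro M hM
        by_contra h
        push_neg at h
        exact h.2 (hex M hM h.1)
      have hprop : ∀ H : Subgroup G, H ≠ ⊤ → Group.IsNilpotent H := by
        intro H hH
        by_contra hHn
        rcases hsimp H (hmeta H hHn) with h | h
        · exact hHn (h ▸ Group.isNilpotent_of_subsingleton)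
        · exact hH h
      exact schmidt_contra hnil hprop hsimp

end Main


end MetaNilSolvable

/-- Every finite meta-Nil-Hamiltonian group is soluble. -/
theorem stmt_8 {G : Type*} [Group G] [Finite G] (hmeta : MetaNilHamiltonian G) :
    IsSolvable G :=
  mainAux (Nat.card G) rfl hmeta
end

section
/- Let G be a para-Nil-Hamiltonian group and let X be a subgroup of G which is neither normal in G nor nilpotent. Then X is a maximal subgroup of its normal closure X^G. Furthermore, if X is finite and G is locally graded, then (i) the normal closure X^G is finite, and (ii) either X is normal in X^G or G is finite. -/
section StmtElevenHelpers

open scoped Pointwise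

variable {G : Type*} [Group G]

private lemma nil_of_le' {A B : Subgroup G} (h : A ≤ B) (hB : Group.IsNilpotent B) :
    Group.IsNilpotent A := by
  haveI := hB
  exact nilpotent_of_mulEquiv (Subgroup.subgroupOfEquivOfLe h)

private lemma eq_of_minimalNonNilpotent' {A B : Subgroup G} (h : A ≤ B)
    (hB : MinimalNonNilpotent B) (hA : ¬ Group.IsNilpotent A) : A = B := by
  by_contra hne
  have hsub : A.subgroupOf B ≠ ⊤ := fun htop =>
    hne (le_antisymm h (Subgroup.subgroupOf_eq_top.mp htop))
  haveI := hB.2 _ hsub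
  exact hA (nilpotent_of_mulEquiv (Subgroup.subgroupOfEquivOfLe h))

private lemma finite_of_normal_finite {H : Type*} [Group H] (M : Subgroup H)
    (hfin : Finite M) (hi : M.index ≠ 0) : Finite H := by
  haveI : M.FiniteIndex := ⟨hi⟩
  haveI : Finite (H ⧸ M) := Subgroup.finite_quotient_of_finiteIndex
  exact Finite.of_equiv _ (Subgroup.groupEquivQuotientProdSubgroup (s := M)).symm

private lemma keyfin {H : Type*} [Group H] (X : Subgroup H) (hfin : Finite X)
    (hco : IsCoatom X) (hfg : Group.FG H)
    (hlg : ∀ M : Subgroup H, M ≠ ⊥ → Group.FG M → ∃ K : Subgroup H, K < M ∧ K.relIndex M ≠ 0) :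
    Finite H := by
  classical
  by_contra hInf
  have key1 : ∀ M : Subgroup H, M.Normal → M.index ≠ 0 → X ⊔ M = ⊤ := by
    intro M hMn hMi
    rcases eq_or_ne (X ⊔ M) X with h | h
    · have hMX : M ≤ X := le_sup_right.trans h.le
      have hMfin : Finite M :=
        Finite.of_injective (Subgroup.inclusion hMX) (Subgroup.inclusion_injective hMX)
      exact absurd (finite_of_normal_finite M hMfin hMi) hInf
    · exact hco.2 _ (lt_of_le_of_ne le_sup_left (Ne.symm h))
  have key2 : ∀ M : Subgroup H, M.Normal → M.index ≠ 0 → M.index ≤ Nat.card X := by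
    intro M hMn hMi
    have hsup := key1 M hMn hMi
    have hsurj : Function.Surjective ((QuotientGroup.mk' M).comp X.subtype) := by
      intro q
      obtain ⟨h, rfl⟩ := QuotientGroup.mk'_surjective M q
      have hmem : h ∈ (X ⊔ M : Subgroup H) := hsup ▸ Subgroup.mem_top h
      have hmem' : h ∈ ((X : Set H) * (M : Set H)) := by
        rw [← Subgroup.mul_normal X M]; exact_mod_cast hmem
      obtain ⟨x, hx, m, hm, rfl⟩ := hmem'
      refine ⟨⟨x, hx⟩, ?_⟩
      show QuotientGroup.mk x = QuotientGroup.mk (x * m)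
      rw [QuotientGroup.eq]
      simpa using hm
    have := Nat.card_le_card_of_surjective _ hsurj
    simpa [Subgroup.index] using this
  have hnontriv : Nontrivial H := by
    rcases subsingleton_or_nontrivial H with h | h
    · exact absurd Finite.of_subsingleton hInf
    · exact h
  have hex : ∃ M : Subgroup H, M.Normal ∧ M.index ≠ 0 := by
    have hfgtop : Group.FG (⊤ : Subgroup H) :=
      Group.fg_of_surjective (f := (Subgroup.topEquiv (G := H)).symm.toMonoidHom)
        (Subgroup.topEquiv (G := H)).symm.surjective
    obtain ⟨K, hKlt, hKrel⟩ := hlg ⊤ (by simp) hfgtop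
    have hKi : K.index ≠ 0 := by rwa [Subgroup.relIndex_top_right] at hKrel
    haveI : K.FiniteIndex := ⟨hKi⟩
    exact ⟨K.normalCore, K.normalCore_normal,
      (Subgroup.finiteIndex_normalCore K).index_ne_zero⟩
  obtain ⟨M1, hM1n, hM1i⟩ := hex
  set P : ℕ → Prop := fun n => ∃ M : Subgroup H, M.Normal ∧ M.index ≠ 0 ∧ M.index = n with hP
  have hPmax : P (Nat.findGreatest P (Nat.card X)) :=
    Nat.findGreatest_spec (key2 M1 hM1n hM1i) ⟨M1, hM1n, hM1i, rfl⟩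
  obtain ⟨M₀, hM₀n, hM₀i, hM₀eq⟩ := hPmax
  have hmax : ∀ L : Subgroup H, L.Normal → L.index ≠ 0 → L.index ≤ M₀.index := by
    intro L hLn hLi
    rw [hM₀eq]
    exact Nat.le_findGreatest (key2 L hLn hLi) ⟨L, hLn, hLi, rfl⟩
  have hmin : ∀ L : Subgroup H, L.Normal → L.index ≠ 0 → M₀ ≤ L := by
    intro L hLn hLi
    have hJn : (M₀ ⊓ L).Normal := by
      constructor
      intro x hx gg
      rw [Subgroup.mem_inf] at hx ⊢
      exact ⟨hM₀n.conj_mem _ hx.1 gg, hLn.conj_mem _ hx.2 gg⟩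
    have hJi : (M₀ ⊓ L).index ≠ 0 := Subgroup.index_inf_ne_zero hM₀i hLi
    have h1 : M₀.index ∣ (M₀ ⊓ L).index := Subgroup.index_dvd_of_le inf_le_left
    have heq : (M₀ ⊓ L).index = M₀.index :=
      le_antisymm (hmax _ hJn hJi) (Nat.le_of_dvd (Nat.pos_of_ne_zero hJi) h1)
    have hrel : (M₀ ⊓ L).relIndex M₀ * M₀.index = (M₀ ⊓ L).index :=
      Subgroup.relIndex_mul_index inf_le_left
    have hone : (M₀ ⊓ L).relIndex M₀ = 1 := by
      have h2 : (M₀ ⊓ L).relIndex M₀ * M₀.index = 1 * M₀.index := by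
        rw [hrel, heq, one_mul]
      exact Nat.eq_of_mul_eq_mul_right (Nat.pos_of_ne_zero hM₀i) h2
    exact le_trans (Subgroup.relIndex_eq_one.mp hone) inf_le_right
  have hM₀notfin : ¬ Finite M₀ := fun h => hInf (finite_of_normal_finite M₀ h hM₀i)
  have hM₀bot : M₀ ≠ ⊥ := by
    rintro rfl
    exact hM₀notfin inferInstance
  haveI : M₀.FiniteIndex := ⟨hM₀i⟩
  haveI hfgH := hfg
  have hM₀fg : Group.FG M₀ := Subgroup.fg_of_index_ne_zero M₀
  obtain ⟨K₂, hK₂lt, hK₂rel⟩ := hlg M₀ hM₀bot hM₀fg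
  have hK₂le : K₂ ≤ M₀ := hK₂lt.le
  have hK₂i : K₂.index ≠ 0 := by
    rw [← Subgroup.relIndex_mul_index hK₂le]
    exact Nat.mul_ne_zero hK₂rel hM₀i
  haveI : K₂.FiniteIndex := ⟨hK₂i⟩
  have hcore : M₀ ≤ K₂.normalCore :=
    hmin _ K₂.normalCore_normal (Subgroup.finiteIndex_normalCore K₂).index_ne_zero
  exact absurd (hcore.trans K₂.normalCore_le) (not_le_of_gt hK₂lt)

end StmtElevenHelpers

/-- In a para-Nil-Hamiltonian group $G$, a subgroup $X$ which is neither normal nor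
nilpotent is maximal in its normal closure $X^G$; moreover if $X$ is finite and $G$
is locally graded, then $X^G$ is finite and either $X \trianglelefteq X^G$ or $G$ is finite. -/
theorem stmt_11 {G : Type*} [Group G] (hpara : ParaNilHamiltonian G) (X : Subgroup G)
    (hXnn : ¬ X.Normal) (hXnil : ¬ Group.IsNilpotent X) :
    IsCoatom (X.subgroupOf (Subgroup.normalClosure (X : Set G))) ∧
    (Finite X → LocallyGraded G →
      Finite (Subgroup.normalClosure (X : Set G)) ∧
      ((X.subgroupOf (Subgroup.normalClosure (X : Set G))).Normal ∨ Finite G)) := by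
  classical
  obtain ⟨hGnil, hP⟩ := hpara
  set N : Subgroup G := Subgroup.normalClosure (X : Set G) with hNdef
  have hXleN : X ≤ N := Subgroup.le_normalClosure
  have hNnormal : N.Normal := Subgroup.normalClosure_normal
  have hXneN : X ≠ N := by
    intro h
    exact hXnn (h ▸ hNnormal)
  have habove : ∀ Z : Subgroup G, X ≤ Z → Z ≠ X → Z.Normal := by
    intro Z hXZ hne
    by_contra hZn
    rcases hP Z hZn with hnil | hmin
    · exact hXnil (nil_of_le' hXZ hnil)
    · exact hne (eq_of_minimalNonNilpotent' hXZ hmin hXnil).symm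
  have haboveN : ∀ Z : Subgroup G, X ≤ Z → Z ≠ X → N ≤ Z := by
    intro Z hXZ hne
    haveI := habove Z hXZ hne
    exact Subgroup.normalClosure_le_normal (SetLike.coe_subset_coe.mpr hXZ)
  have hmapX : (X.subgroupOf N).map N.subtype = X := by
    rw [Subgroup.subgroupOf_map_subtype, inf_eq_left.mpr hXleN]
  have htopmap : ((⊤ : Subgroup ↥N)).map N.subtype = N := by
    rw [← MonoidHom.range_eq_map, Subgroup.range_subtype]
  have hco : IsCoatom (X.subgroupOf N) := by
    constructor
    · intro htop
      exact hXneN (le_antisymm hXleN (Subgroup.subgroupOf_eq_top.mp htop))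
    · intro b hlt
      have hZN : b.map N.subtype ≤ N := Subgroup.map_subtype_le b
      have hXZ : X ≤ b.map N.subtype := by
        rw [← hmapX]; exact Subgroup.map_mono hlt.le
      have hZX : b.map N.subtype ≠ X := by
        intro h
        exact hlt.ne (Subgroup.map_injective N.subtype_injective (hmapX.trans h.symm))
      have hZeq : b.map N.subtype = N :=
        le_antisymm hZN (haboveN _ hXZ hZX)
      apply Subgroup.map_injective N.subtype_injective
      rw [hZeq, htopmap]
  refine ⟨hco, ?_⟩
  intro hXfin hlgG
  -- a conjugate of X not contained in X
  have hX' : ¬ ∀ n ∈ X, ∀ g : G, g * n * g⁻¹ ∈ X := fun h => hXnn ⟨fun n hn g => h n hn g⟩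
  push_neg at hX'
  obtain ⟨n, hn, g, hg⟩ := hX'
  set C : Subgroup G := X.map (MulAut.conj g).toMonoidHom with hCdef
  have hCN : C ≤ N := by
    rintro x ⟨y, hy, rfl⟩
    have hyN : y ∈ N := hXleN hy
    simpa [MulAut.conj_apply] using hNnormal.conj_mem y hyN g
  have hmemC : g * n * g⁻¹ ∈ C := ⟨n, hn, by simp [MulAut.conj_apply]⟩
  have hXZ : X ≤ X ⊔ C := le_sup_left
  have hZX : X ⊔ C ≠ X := by
    intro h
    exact hg (h ▸ (le_sup_right (a := X) (b := C)) hmemC)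
  have hZeqN : X ⊔ C = N := le_antisymm (sup_le hXleN hCN) (haboveN _ hXZ hZX)
  have hXsetfin : (X : Set G).Finite := Set.toFinite _
  have hSfin : ((X : Set G) ∪ (C : Set G)).Finite := by
    apply Set.Finite.union hXsetfin
    rw [hCdef, Subgroup.coe_map]
    exact hXsetfin.image _
  have hNfg : Group.FG ↥N := by
    have hNS : N = Subgroup.closure ((X : Set G) ∪ (C : Set G)) := by
      rw [Subgroup.closure_union, Subgroup.closure_eq, Subgroup.closure_eq, hZeqN]
    rw [hNS]
    haveI := hSfin.to_subtype
    exact Group.closure_finite_fg _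
  have hlgN : ∀ M : Subgroup ↥N, M ≠ ⊥ → Group.FG M →
      ∃ K : Subgroup ↥N, K < M ∧ K.relIndex M ≠ 0 := by
    intro M hMbot hMfg
    have e : ↥M ≃* ↥(M.map N.subtype) :=
      Subgroup.equivMapOfInjective M N.subtype N.subtype_injective
    have hM'bot : M.map N.subtype ≠ ⊥ := by
      intro h
      apply hMbot
      apply Subgroup.map_injective N.subtype_injective
      rw [h, Subgroup.map_bot]
    have hes : Function.Surjective ⇑e.toMonoidHom := e.surjective
    have hM'fg : Group.FG ↥(M.map N.subtype) :=
      @Group.fg_of_surjective _ _ _ _ hMfg e.toMonoidHom hes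
    obtain ⟨K, hKtop, hKfi⟩ := hlgG (M.map N.subtype) hM'bot hM'fg
    have hK₁top : K.comap e.toMonoidHom ≠ ⊤ := by
      intro h
      apply hKtop
      apply Subgroup.comap_injective hes
      rw [h, Subgroup.comap_top]
    have hK₁i : (K.comap e.toMonoidHom).index ≠ 0 := by
      have h2 := Subgroup.index_comap_of_surjective (H := K) hes
      rw [h2]
      exact hKfi.index_ne_zero
    refine ⟨(K.comap e.toMonoidHom).map M.subtype, ?_, ?_⟩
    · refine lt_of_le_of_ne (Subgroup.map_subtype_le _) ?_
      intro h
      apply hK₁top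
      apply Subgroup.map_injective M.subtype_injective
      rw [h, ← MonoidHom.range_eq_map, Subgroup.range_subtype]
    · have hrel : ((K.comap e.toMonoidHom).map M.subtype).relIndex M
          = (K.comap e.toMonoidHom).index := by
        unfold Subgroup.relIndex
        rw [Subgroup.subgroupOf, Subgroup.comap_map_eq_self_of_injective M.subtype_injective]
      rw [hrel]
      exact hK₁i
  have hfinX' : Finite ↥(X.subgroupOf N) :=
    Finite.of_equiv _ (Subgroup.subgroupOfEquivOfLe hXleN).symm.toEquiv
  have hNfin : Finite ↥N := keyfin (X.subgroupOf N) hfinX' hco hNfg hlgN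
  refine ⟨hNfin, ?_⟩
  by_cases hnorm : (X.subgroupOf N).Normal
  · exact Or.inl hnorm
  right
  -- normalizer of X is X
  have hTX : (Subgroup.normalizer (X : Set G)) = X := by
    rcases eq_or_ne (Subgroup.normalizer (X : Set G)) X with h | h
    · exact h
    · exfalso
      have hNle : N ≤ (Subgroup.normalizer (X : Set G)) := haboveN _ Subgroup.le_normalizer h
      apply hnorm
      constructor
      rintro x hx nn
      have hxX : (x : G) ∈ X := hx
      have : ((nn : G) * (x : G) * (nn : G)⁻¹) ∈ X :=
        (Subgroup.mem_normalizer_iff.mp (hNle nn.2) (x : G)).mp hxX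
      simpa [Subgroup.mem_subgroupOf] using this
  haveI : Finite (Subgroup ↥N) :=
    Finite.of_injective (fun K : Subgroup ↥N => (K : Set ↥N)) SetLike.coe_injective
  -- conjugates of X are inside N
  have hconjN : ∀ a : G, X.map (MulAut.conj a).toMonoidHom ≤ N := by
    intro a
    rintro x ⟨y, hy, rfl⟩
    have hyN : y ∈ N := hXleN hy
    simpa [MulAut.conj_apply] using hNnormal.conj_mem y hyN a
  have hconjfix : ∀ t ∈ (Subgroup.normalizer (X : Set G)), X.map (MulAut.conj t).toMonoidHom = X := by
    intro t ht
    ext x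
    constructor
    · rintro ⟨y, hy, rfl⟩
      simpa [MulAut.conj_apply] using (Subgroup.mem_normalizer_iff.mp ht y).mp hy
    · intro hx
      exact ⟨t⁻¹ * x * t, by
        have := (Subgroup.mem_normalizer_iff.mp ht (t⁻¹ * x * t)).mpr
        apply this
        simpa [mul_assoc] using hx, by simp [MulAut.conj_apply]; group⟩
  have hcomp : ∀ a b : G, X.map (MulAut.conj (a * b)).toMonoidHom
      = (X.map (MulAut.conj b).toMonoidHom).map (MulAut.conj a).toMonoidHom := by
    intro a b
    rw [Subgroup.map_map]
    congr 1
    ext x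
    simp [MulAut.conj_apply, mul_assoc]
  set f : G → Subgroup ↥N := fun a => ((X.map (MulAut.conj a).toMonoidHom).subgroupOf N)
    with hfdef
  have hfconst : ∀ a b : G, a⁻¹ * b ∈ (Subgroup.normalizer (X : Set G)) → f a = f b := by
    intro a b hab
    have : X.map (MulAut.conj b).toMonoidHom = X.map (MulAut.conj a).toMonoidHom := by
      have hb : b = a * (a⁻¹ * b) := by group
      rw [hb, hcomp, hconjfix _ hab]
    simp only [hfdef, this]
  have hfinj : ∀ a b : G, f a = f b → a⁻¹ * b ∈ (Subgroup.normalizer (X : Set G)) := by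
    intro a b hfab
    have hCab : X.map (MulAut.conj a).toMonoidHom = X.map (MulAut.conj b).toMonoidHom := by
      have h1 := congrArg (fun K : Subgroup ↥N => K.map N.subtype) hfab
      simpa only [hfdef, Subgroup.subgroupOf_map_subtype,
        inf_eq_left.mpr (hconjN a), inf_eq_left.mpr (hconjN b)] using h1
    have hid : X.map (MulAut.conj (1 : G)).toMonoidHom = X := by
      ext x
      simp [MulEquiv.coe_toMonoidHom, MulAut.conj_apply]
    have hXc : X.map (MulAut.conj (a⁻¹ * b)).toMonoidHom = X := by
      have := congrArg (fun K : Subgroup G => K.map (MulAut.conj a⁻¹).toMonoidHom) hCab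
      rw [← hcomp, ← hcomp, inv_mul_cancel] at this
      exact this.symm.trans hid
    rw [Subgroup.mem_normalizer_iff]
    intro h
    constructor
    · intro hh
      rw [← hXc]
      exact ⟨h, hh, by simp [MulEquiv.coe_toMonoidHom, MulAut.conj_apply]; group⟩
    · intro hh
      rw [← hXc] at hh
      obtain ⟨y, hy, hEq⟩ := hh
      simp only [MulEquiv.coe_toMonoidHom, MulAut.conj_apply] at hEq
      have : y = h := by
        have := mul_left_cancel (mul_right_cancel hEq)
        exact this
      rwa [← this]
  have hFfin : Finite (G ⧸ (Subgroup.normalizer (X : Set G))) := by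
    have : Function.Injective (Quotient.lift f (by
      intro a b hab
      exact hfconst a b (QuotientGroup.leftRel_apply.mp hab)) : G ⧸ (Subgroup.normalizer (X : Set G)) → Subgroup ↥N) := by
      intro q1 q2
      refine Quotient.inductionOn₂ q1 q2 ?_
      intro a b h
      exact Quotient.sound (QuotientGroup.leftRel_apply.mpr (hfinj a b h))
    exact Finite.of_injective _ this
  rw [hTX] at hFfin
  exact Finite.of_equiv _ (Subgroup.groupEquivQuotientProdSubgroup (s := X)).symm
end

section
/- Let G be a biminimal non-nilpotent group which is locally nilpotent. Then G is meta-Nil-Hamiltonian, i.e., every non-nilpotent subgroup of G is normal in G. -/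
universe u

open scoped Pointwise
open scoped commutatorElement

lemma commAux1 {N : Type*} [Group N] {z : N} (hz : z ∈ Subgroup.center N) (a b : N) :
    ⁅a * z, b⁆ = ⁅a, b⁆ := by
  have h : b * z = z * b := Subgroup.mem_center_iff.mp hz b
  rw [commutatorElement_def, commutatorElement_def, mul_inv_rev, mul_assoc a z b, ← h]
  group

lemma commAux2 {N : Type*} [Group N] {z : N} (hz : z ∈ Subgroup.center N) (a b : N) :
    ⁅a, b * z⁆ = ⁅a, b⁆ := by
  have h : a⁻¹ * z = z * a⁻¹ := Subgroup.mem_center_iff.mp hz a⁻¹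
  rw [commutatorElement_def, commutatorElement_def, mul_inv_rev, ← mul_assoc a b z,
    mul_assoc (a * b) z a⁻¹, ← h]
  group

lemma auxA (n : ℕ) : ∀ (N : Type u) [Group N] [Group.IsNilpotent N],
    Group.nilpotencyClass N ≤ n → ∀ K : Subgroup N,
      K ⊔ ⁅(⊤ : Subgroup N), (⊤ : Subgroup N)⁆ = ⊤ → K = ⊤ := by
  induction n with
  | zero =>
    intro N _ _ hc K _
    have : Subsingleton N := nilpotencyClass_zero_iff_subsingleton.mp (Nat.le_zero.mp hc)
    exact (Subgroup.eq_top_iff' K).mpr fun x => by rw [Subsingleton.elim x 1]; exact one_mem _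
  | succ n ih =>
    intro N _ _ hc K hK
    set Z := Subgroup.center N
    let π := QuotientGroup.mk' Z
    have hsurj : Function.Surjective π := QuotientGroup.mk'_surjective Z
    have hclass : Group.nilpotencyClass (N ⧸ Z) ≤ n := by
      rw [nilpotencyClass_quotient_center]; omega
    have hmap : K.map π ⊔ ⁅(⊤ : Subgroup (N ⧸ Z)), (⊤ : Subgroup (N ⧸ Z))⁆ = ⊤ := by
      have h2 := congrArg (Subgroup.map π) hK
      rwa [Subgroup.map_sup, Subgroup.map_commutator,
        Subgroup.map_top_of_surjective π hsurj] at h2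
    have hKtop := ih _ hclass _ hmap
    have hsup : K ⊔ Z = ⊤ := by
      have h2 := congrArg (Subgroup.comap π) hKtop
      rwa [Subgroup.comap_map_eq, QuotientGroup.ker_mk', Subgroup.comap_top] at h2
    have hcomm : ⁅(⊤ : Subgroup N), (⊤ : Subgroup N)⁆ ≤ K := by
      rw [Subgroup.commutator_le]
      intro a _ b _
      have ha : a ∈ (K : Set N) * (Z : Set N) := by
        rw [← Subgroup.mul_normal K Z, hsup]; trivial
      have hb : b ∈ (K : Set N) * (Z : Set N) := by
        rw [← Subgroup.mul_normal K Z, hsup]; trivial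
      obtain ⟨k, hk, z, hz, rfl⟩ := ha
      obtain ⟨k', hk', z', hz', rfl⟩ := hb
      rw [commAux1 hz, commAux2 hz']
      rw [commutatorElement_def]
      exact K.mul_mem (K.mul_mem (K.mul_mem hk hk') (K.inv_mem hk)) (K.inv_mem hk')
    rw [← hK, sup_eq_left.mpr hcomm]

lemma maximal_normal {G : Type u} [Group G]
    (hln : ∀ H : Subgroup G, Group.FG H → Group.IsNilpotent H)
    (M : Subgroup G) (hmax : ∀ K : Subgroup G, M < K → K = ⊤) : M.Normal := by
  by_cases hcomm : ⁅(⊤ : Subgroup G), (⊤ : Subgroup G)⁆ ≤ M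
  · constructor
    intro m hm g
    have h1 : ⁅g, m⁆ ∈ M :=
      hcomm (Subgroup.commutator_mem_commutator (Subgroup.mem_top g) (Subgroup.mem_top m))
    have h2 : g * m * g⁻¹ = ⁅g, m⁆ * m := by group
    rw [h2]; exact M.mul_mem h1 hm
  · exfalso
    rw [Subgroup.commutator_le] at hcomm
    push_neg at hcomm
    obtain ⟨x, -, y, -, hc⟩ := hcomm
    set c := ⁅x, y⁆ with hcdef
    set s : Set G := ↑M ∪ {c} with hsdef
    have hsup : Subgroup.closure s = ⊤ := by
      rw [hsdef, Set.union_comm, Subgroup.closure_union, Subgroup.closure_eq]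
      apply hmax
      refine lt_of_le_of_ne le_sup_right ?_
      intro h
      exact hc (h ▸ (le_sup_left : Subgroup.closure {c} ≤ _) (Subgroup.subset_closure rfl))
    have hlist : ∀ w : G, ∃ l : List G, (∀ z ∈ l, z ∈ s ∪ s⁻¹) ∧ l.prod = w := by
      intro w
      have hw : w ∈ Submonoid.closure (s ∪ s⁻¹) := by
        rw [← Subgroup.closure_toSubmonoid, Subgroup.mem_toSubmonoid, hsup]
        trivial
      exact Submonoid.exists_list_of_mem_closure hw
    obtain ⟨lx, hlx, hlxp⟩ := hlist x
    obtain ⟨ly, hly, hlyp⟩ := hlist y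
    set sgen : Set G := insert x (insert y {z | z ∈ lx ++ ly}) with hsgen
    have hfin : sgen.Finite :=
      (Set.Finite.insert y (lx ++ ly).finite_toSet).insert x
    set F : Subgroup G := Subgroup.closure sgen with hF
    have hFfg : Group.FG F :=
      (Group.fg_iff_subgroup_fg F).mpr ((Subgroup.fg_iff F).mpr ⟨sgen, rfl, hfin⟩)
    have hFnil : Group.IsNilpotent F := hln F hFfg
    have hxF : x ∈ F := Subgroup.subset_closure (by simp [hsgen])
    have hyF : y ∈ F := Subgroup.subset_closure (by simp [hsgen])
    set X : Subgroup F := M.subgroupOf F ⊔ ⁅(⊤ : Subgroup F), (⊤ : Subgroup F)⁆ with hX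
    have hcX : c ∈ Subgroup.map F.subtype X := by
      refine ⟨⁅(⟨x, hxF⟩ : F), (⟨y, hyF⟩ : F)⁆, ?_, ?_⟩
      · exact Subgroup.mem_sup_right (Subgroup.commutator_mem_commutator (Subgroup.mem_top _) (Subgroup.mem_top _))
      · rw [map_commutatorElement]; rfl
    have hzX : ∀ z ∈ lx ++ ly, z ∈ Subgroup.map F.subtype X := by
      intro z hzl
      have hzF : z ∈ F := Subgroup.subset_closure
        (by simp only [hsgen, Set.mem_insert_iff, Set.mem_setOf_eq]
            rcases List.mem_append.mp hzl with h | h <;> tauto)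
      have hzs : z ∈ s ∪ s⁻¹ := by
        rcases List.mem_append.mp hzl with h | h
        · exact hlx z h
        · exact hly z h
      rcases hzs with hzs | hzs
      · rcases hzs with hzM | hzc
        · exact ⟨⟨z, hzF⟩, Subgroup.mem_sup_left (by rwa [Subgroup.mem_subgroupOf]), rfl⟩
        · rw [Set.mem_singleton_iff] at hzc; rw [hzc]; exact hcX
      · rw [Set.mem_inv] at hzs
        rcases hzs with hzM | hzc
        · refine ⟨⟨z, hzF⟩, Subgroup.mem_sup_left ?_, rfl⟩
          rw [← inv_mem_iff, Subgroup.mem_subgroupOf]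
          exact hzM
        · rw [Set.mem_singleton_iff] at hzc
          have : z⁻¹ ∈ Subgroup.map F.subtype X := by rw [hzc]; exact hcX
          rwa [inv_mem_iff] at this
    have hFle : F ≤ Subgroup.map F.subtype X := by
      show Subgroup.closure sgen ≤ Subgroup.map F.subtype X
      rw [Subgroup.closure_le]
      intro z hz
      rcases hz with rfl | hz
      · have : (lx : List G).prod ∈ Subgroup.map F.subtype X :=
          list_prod_mem fun w hw => hzX w (List.mem_append_left _ hw)
        rwa [hlxp] at this
      rcases hz with rfl | hz
      · have : (ly : List G).prod ∈ Subgroup.map F.subtype X :=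
          list_prod_mem fun w hw => hzX w (List.mem_append_right _ hw)
        rwa [hlyp] at this
      · exact hzX z hz
    have hXtop : X = ⊤ := by
      refine (Subgroup.eq_top_iff' X).mpr fun a => ?_
      obtain ⟨b, hb, hba⟩ := hFle a.2
      have : b = a := Subtype.ext hba
      rwa [this] at hb
    have hMF : M.subgroupOf F = ⊤ :=
      auxA (Group.nilpotencyClass F) F le_rfl (M.subgroupOf F) (hX ▸ hXtop)
    have hFM : F ≤ M := Subgroup.subgroupOf_eq_top.mp hMF
    apply hc
    rw [hcdef, commutatorElement_def]
    have hxM := hFM hxF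
    have hyM := hFM hyF
    exact M.mul_mem (M.mul_mem (M.mul_mem hxM hyM) (M.inv_mem hxM)) (M.inv_mem hyM)

/-- A biminimal non-nilpotent locally nilpotent group is meta-Nil-Hamiltonian:
every non-nilpotent subgroup of it is normal. -/
theorem stmt_17 {G : Type*} [Group G] (hbi : BiminimalNonNilpotent G)
    (hln : LocallyNilpotent G) :
    MetaNilHamiltonian G := by
  intro H hH
  by_cases htop : H = ⊤
  · subst htop; infer_instance
  · have hmin : MinimalNonNilpotent H := (hbi.2.2 H htop).resolve_left hH
    have hmax : ∀ K : Subgroup G, H < K → K = ⊤ := by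
      intro K hK
      by_contra hKtop
      have hnil : Group.IsNilpotent (H.subgroupOf K) → False := by
        intro h
        exact hH ((Group.isNilpotent_congr (Subgroup.subgroupOfEquivOfLe hK.le)).mp h)
      rcases hbi.2.2 K hKtop with hKnil | hKmin
      · haveI := hKnil
        exact hnil inferInstance
      · apply hnil
        apply hKmin.2 (H.subgroupOf K)
        intro h
        exact hK.ne (le_antisymm hK.le (Subgroup.subgroupOf_eq_top.mp h))
    exact maximal_normal hln H hmax
end
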